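/- Let k be a field, A a unital associative k-algebra, u ∈ A, and let p = p_1^{m_1}···p_r^{m_r} ∈ k[x] be a monic annihilating polynomial of u whose monic irreducible factors p_1, …, p_r are pairwise distinct and separable. Set p̃ = p_1···p_r, p̄ = p/p̃ and m = max_{1≤j≤r} m_j, and let q ∈ k[x] satisfy q·p̃' ≡ 1 (mod p̄). Define a sequence in A by d_0 = u and d_{n+1} = d_n − p̃(d_n)·q(d_n) for n ≥ 0, and let N be the smallest integer with 2^N ≥ m. Then p̃(d_N) = 0 (so d_N is absolutely semisimple), u − d_N is nilpotent, d_N commutes with u − d_N, and (d_N, u − d_N) is the unique Jordan–Chevalley decomposition of u. -/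

import Mathlib

open Polynomial

/-- Order-2 Taylor expansion of a polynomial evaluated at `a - t`. -/
lemma jc_taylor2 {R : Type*} [CommRing R] (F : R[X]) (a t : R) :
    ∃ w : R, F.eval (a - t) = F.eval a - F.derivative.eval a * t + t ^ 2 * w := by
  set G := Polynomial.taylor a F with hG
  have h1 : F.eval (a - t) = G.eval (-t) := by
    rw [hG, taylor_eval]; ring_nf
  have hdec : G = (G.divX.divX * X + C (G.divX.coeff 0)) * X + C (G.coeff 0) := by
    rw [divX_mul_X_add, divX_mul_X_add]
  refine ⟨G.divX.divX.eval (-t), ?_⟩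
  have h2 : G.eval (-t) = (G.divX.divX.eval (-t) * (-t) + G.divX.coeff 0) * (-t) + G.coeff 0 := by
    conv_lhs => rw [hdec]
    simp
  rw [h1, h2, coeff_divX, taylor_coeff_zero, taylor_coeff_one]
  ring

/-- If `b` is annihilated by a separable polynomial, then any nilpotent
polynomial expression in `b` vanishes. -/
lemma jc_nilp_aeval {k A : Type*} [Field k] [Ring A] [Algebra k A] {b : A} {g f : k[X]}
    (hg : g.Separable) (hgb : aeval b g = 0) (hnil : IsNilpotent (aeval b f)) :
    aeval b f = 0 := by
  classical
  obtain ⟨n, hn⟩ := hnil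
  rcases Nat.eq_zero_or_pos n with rfl | hnpos
  · have : (1 : A) = 0 := by simpa using hn
    have : Subsingleton A := subsingleton_of_zero_eq_one this.symm
    exact Subsingleton.elim _ _
  have h1 : aeval b (f ^ n) = 0 := by rw [map_pow, hn]
  set h := EuclideanDomain.gcd g (f ^ n) with hh
  have hb : aeval b h = 0 := by
    rw [hh, EuclideanDomain.gcd_eq_gcd_ab]
    simp [map_add, map_mul, hgb, h1]
  have hdg : h ∣ g := EuclideanDomain.gcd_dvd_left _ _
  have hsq : Squarefree h := (hg.of_dvd hdg).squarefree
  have hdf : h ∣ f :=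
    (hsq.dvd_pow_iff_dvd hnpos.ne').mp (EuclideanDomain.gcd_dvd_right _ _)
  obtain ⟨c, hc⟩ := hdf
  rw [hc, map_mul, hb, zero_mul]

/-- In a commutative ring, if `a - b` is nilpotent and `f(b) = 0` then `f(a)` is
nilpotent. -/
lemma jc_nilp_lift {k R : Type*} [Field k] [CommRing R] [Algebra k R] {f : k[X]}
    {a b : R} (hab : IsNilpotent (a - b)) (hb : aeval b f = 0) :
    IsNilpotent (aeval a f) := by
  have h0 := sub_dvd_eval_sub a b (f.map (algebraMap k R))
  rw [eval_map, eval_map, ← aeval_def, ← aeval_def, hb, sub_zero] at h0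
  obtain ⟨c, hc⟩ := h0
  rw [hc]
  exact (Commute.all _ _).isNilpotent_mul_right hab

/-- Two roots of a separable polynomial in a commutative ring whose difference is
nilpotent must coincide. -/
lemma jc_eq_of_sep {k R : Type*} [Field k] [CommRing R] [Algebra k R] {f : k[X]}
    (hf : f.Separable) {a b : R} (ha : aeval a f = 0) (hb : aeval b f = 0)
    (hab : IsNilpotent (a - b)) : a = b := by
  set F := f.map (algebraMap k R) with hF
  have heval : ∀ x : R, F.eval x = aeval x f := fun x => by
    rw [hF, eval_map, aeval_def]
  have hdev : ∀ x : R, F.derivative.eval x = aeval x (derivative f) := fun x => by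
    rw [hF, derivative_map, eval_map, aeval_def]
  obtain ⟨w, hw⟩ := jc_taylor2 F a (a - b)
  have hab' : a - (a - b) = b := by ring
  rw [hab', heval, heval, hdev, ha, hb] at hw
  have hmain : (a - b) * (aeval a (derivative f) - (a - b) * w) = 0 := by
    linear_combination hw
  obtain ⟨c1, c2, hc⟩ := hf
  have hunit : IsUnit (aeval a (derivative f)) := by
    apply IsUnit.of_mul_eq_one (aeval a c2)
    have := congrArg (aeval a) hc
    simp only [map_add, map_mul, map_one, ha, mul_zero, zero_add] at this
    linear_combination this
  have hnil2 : IsNilpotent (-((a - b) * w)) :=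
    (((Commute.all _ w).isNilpotent_mul_right hab)).neg
  have hu2 : IsUnit (aeval a (derivative f) - (a - b) * w) := by
    have := hnil2.isUnit_add_left_of_commute hunit (Commute.all _ _)
    simpa [sub_eq_add_neg, add_comm] using this
  exact sub_eq_zero.mp ((hu2.mul_left_eq_zero).mp hmain)

/-- An element commuting with `y` commutes with any polynomial in `y`. -/
lemma jc_commute_aeval {k A : Type*} [Field k] [Ring A] [Algebra k A] {x y : A}
    (h : Commute x y) (P : k[X]) : Commute x (aeval y P) := by
  induction P using Polynomial.induction_on with
  | C a => rw [aeval_C]; exact Commute.symm (Algebra.commutes a x)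
  | add p q hp hq => simpa [map_add] using hp.add_right hq
  | monomial n a ih =>
      simp only [map_mul, map_pow, aeval_C, aeval_X]
      exact (Commute.symm (Algebra.commutes a x)).mul_right (h.pow_right _)

/-- Uniqueness core: if `a` and `b` commute, each is annihilated by a separable
polynomial, and `b - a` is nilpotent, then `b = a`. -/
lemma jc_unique_core {k A : Type*} [Field k] [Ring A] [Algebra k A]
    {a b : A} (hab : a * b = b * a) {f g : k[X]}
    (hf : f.Separable) (hg : g.Separable)
    (hfa : aeval a f = 0) (hgb : aeval b g = 0)
    (hnil : IsNilpotent (b - a)) : b = a := by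
  letI : CommRing (Algebra.adjoin k ({a, b} : Set A)) :=
    Algebra.adjoinCommRingOfComm k (by
      intro x hx y hy
      simp only [Set.mem_insert_iff, Set.mem_singleton_iff] at hx hy
      rcases hx with rfl | rfl <;> rcases hy with rfl | rfl
      · rfl
      · exact hab
      · exact hab.symm
      · rfl)
  have haB : a ∈ Algebra.adjoin k ({a, b} : Set A) := Algebra.subset_adjoin (by simp)
  have hbB : b ∈ Algebra.adjoin k ({a, b} : Set A) := Algebra.subset_adjoin (by simp)
  have hnilB : IsNilpotent ((⟨b, hbB⟩ : Algebra.adjoin k ({a, b} : Set A)) - ⟨a, haB⟩) := by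
    obtain ⟨n, hn⟩ := hnil
    exact ⟨n, Subtype.ext (by push_cast; exact hn)⟩
  have hfaB : aeval (⟨a, haB⟩ : Algebra.adjoin k ({a, b} : Set A)) f = 0 := by
    rw [← Subalgebra.coe_eq_zero, aeval_subalgebra_coe]
    exact hfa
  have h1 : IsNilpotent (aeval (⟨b, hbB⟩ : Algebra.adjoin k ({a, b} : Set A)) f) :=
    jc_nilp_lift hnilB hfaB
  have h2 : IsNilpotent (aeval b f) := by
    have h2' := h1.map (Algebra.adjoin k ({a, b} : Set A)).val
    rwa [show (Algebra.adjoin k ({a, b} : Set A)).val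
        (aeval (⟨b, hbB⟩ : Algebra.adjoin k ({a, b} : Set A)) f) = aeval b f from by
      rw [show ((Algebra.adjoin k ({a, b} : Set A)).val
          (aeval (⟨b, hbB⟩ : Algebra.adjoin k ({a, b} : Set A)) f))
          = ((aeval (⟨b, hbB⟩ : Algebra.adjoin k ({a, b} : Set A)) f :
            Algebra.adjoin k ({a, b} : Set A)) : A) from rfl, aeval_subalgebra_coe]] at h2'
  have h3 : aeval b f = 0 := jc_nilp_aeval hg hgb h2
  have hfbB : aeval (⟨b, hbB⟩ : Algebra.adjoin k ({a, b} : Set A)) f = 0 := by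
    rw [← Subalgebra.coe_eq_zero, aeval_subalgebra_coe]
    exact h3
  have h4 : (⟨b, hbB⟩ : Algebra.adjoin k ({a, b} : Set A)) = ⟨a, haB⟩ :=
    jc_eq_of_sep hf hfbB hfaB hnilB
  exact congrArg Subtype.val h4

/-- An element of a `k`-algebra is absolutely semisimple if it has a separable
annihilating polynomial. -/
def AbsSemisimple (k : Type*) [Field k] {A : Type*} [Ring A] [Algebra k A] (u : A) : Prop :=
  ∃ f : k[X], f.Separable ∧ aeval u f = 0

/-- A Jordan–Chevalley decomposition of `u` is a pair `(d, s)` with `d` absolutely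
semisimple, `s` nilpotent, `u = d + s` and `d s = s d`. -/
def IsJordanChevalley (k : Type*) [Field k] {A : Type*} [Ring A] [Algebra k A]
    (u d s : A) : Prop :=
  AbsSemisimple k d ∧ IsNilpotent s ∧ u = d + s ∧ d * s = s * d

theorem jordan_chevalley_newton
    {k : Type*} [Field k] {A : Type*} [Ring A] [Algebra k A]
    (u : A) (r : ℕ) (hr : 0 < r) (pf : Fin r → k[X]) (mexp : Fin r → ℕ)
    (hmon : ∀ i, (pf i).Monic) (hirr : ∀ i, Irreducible (pf i))
    (hsep : ∀ i, (pf i).Separable)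
    (hdist : ∀ i j, i ≠ j → pf i ≠ pf j)
    (hm1 : ∀ i, 1 ≤ mexp i)
    (p ptilde pbar : k[X])
    (hp : p = ∏ i, pf i ^ mexp i)
    (hpt : ptilde = ∏ i, pf i)
    (hpb : p = ptilde * pbar)
    (hann : aeval u p = 0)
    (q : k[X]) (hq : pbar ∣ q * derivative ptilde - 1)
    (m : ℕ) (hm : m = Finset.univ.sup mexp)
    (N : ℕ) (hN1 : m ≤ 2 ^ N) (hN2 : ∀ M, m ≤ 2 ^ M → N ≤ M)
    (d : ℕ → A) (hd0 : d 0 = u)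
    (hdrec : ∀ n, d (n + 1) = d n - aeval (d n) ptilde * aeval (d n) q) :
    aeval (d N) ptilde = 0 ∧ AbsSemisimple k (d N) ∧ IsNilpotent (u - d N) ∧
    d N * (u - d N) = (u - d N) * d N ∧
    IsJordanChevalley k u (d N) (u - d N) ∧
    ∀ d' s' : A, IsJordanChevalley k u d' s' → d' = d N ∧ s' = u - d N := by
  classical
  -- basic facts
  have hptm : ptilde.Monic := by
    rw [hpt]; exact monic_prod_of_monic _ _ fun i _ => hmon i
  have hpt0 : ptilde ≠ 0 := hptm.ne_zero
  have hpdvd : p ∣ ptilde ^ m := by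
    rw [hp, hpt, ← Finset.prod_pow]
    exact Finset.prod_dvd_prod_of_dvd _ _ fun i _ =>
      pow_dvd_pow _ (hm ▸ Finset.le_sup (Finset.mem_univ i))
  have hsplitp : (∏ i, pf i ^ mexp i) = (∏ i, pf i) * ∏ i, pf i ^ (mexp i - 1) := by
    rw [← Finset.prod_mul_distrib]
    exact Finset.prod_congr rfl fun i _ => by
      rw [← pow_succ', Nat.sub_add_cancel (hm1 i)]
  have hpbar_eq : pbar = ∏ i, pf i ^ (mexp i - 1) := by
    apply mul_left_cancel₀ hpt0
    rw [← hpb, hp, hsplitp, ← hpt]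
  have hcop : Pairwise (Function.onFun IsCoprime pf) := by
    intro i j hij
    exact (hirr i).coprime_iff_not_dvd.mpr fun hdvd =>
      hdist i j hij (eq_of_monic_of_associated (hmon i) (hmon j)
        ((hirr i).associated_of_dvd (hirr j) hdvd))
  have hsepT : ptilde.Separable := by
    rw [hpt]; exact separable_prod hcop hsep
  -- the polynomial Newton sequence
  let D : ℕ → k[X] := fun n => Nat.rec X (fun _ Dn => Dn - ptilde.comp Dn * q.comp Dn) n
  have hDsucc : ∀ n, D (n + 1) = D n - ptilde.comp (D n) * q.comp (D n) := fun n => rfl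
  have hD0 : D 0 = X := rfl
  have hDa : ∀ n, aeval u (D n) = d n := by
    intro n
    induction n with
    | zero => rw [hD0, hd0]; exact aeval_X u
    | succ n ih =>
        rw [hDsucc, hdrec, map_sub, map_mul, aeval_comp, aeval_comp, ih]
  have hcompeval : ∀ (f y : k[X]), (f.map C).eval y = f.comp y := fun f y => by
    rw [eval_map]; rfl
  -- D n ≡ X mod ptilde
  have hXdvd : ∀ n, ptilde ∣ D n - X := by
    intro n
    induction n with
    | zero => simp [hD0]
    | succ n ih =>
        have he : ptilde ∣ ptilde.comp (D n) := by
          have h1 : D n - X ∣ ptilde.comp (D n) - ptilde := by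
            have h0 := sub_dvd_eval_sub (D n) X (ptilde.map C)
            rwa [hcompeval, hcompeval, comp_X] at h0
          have h2 := ih.trans h1
          have h3 : ptilde.comp (D n) = (ptilde.comp (D n) - ptilde) + ptilde := by ring
          rw [h3]; exact dvd_add h2 dvd_rfl
        rw [hDsucc]
        have h4 : D n - ptilde.comp (D n) * q.comp (D n) - X
            = (D n - X) - ptilde.comp (D n) * q.comp (D n) := by ring
        rw [h4]
        exact dvd_sub ih (he.mul_right _)
  -- the key induction, factor by factor
  have key : ∀ n i, pf i ^ min (2 ^ n) (mexp i) ∣ ptilde.comp (D n) := by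
    intro n
    induction n with
    | zero =>
        intro i
        have h : min (2 ^ 0) (mexp i) = 1 := by simpa using Nat.min_eq_left (hm1 i)
        rw [h, pow_one, hD0, comp_X, hpt]
        exact Finset.dvd_prod_of_mem _ (Finset.mem_univ i)
    | succ n ih =>
        intro i
        rw [hDsucc]
        set e := ptilde.comp (D n) with he
        set qc := q.comp (D n) with hqc
        obtain ⟨w, hw⟩ := jc_taylor2 (ptilde.map C) (D n) (e * qc)
        simp only [derivative_map, hcompeval] at hw
        have hsplit : ptilde.comp (D n - e * qc)
            = e * (1 - (q * derivative ptilde).comp (D n)) + e ^ 2 * (qc ^ 2 * w) := by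
          rw [hw, mul_comp]; ring
        rw [hsplit]
        have hmin1 : 1 ≤ min (2 ^ n) (mexp i) := le_min Nat.one_le_two_pow (hm1 i)
        have hpfc : pf i ∣ (pf i).comp (D n) := by
          have h1 : D n - X ∣ (pf i).comp (D n) - pf i := by
            have h0 := sub_dvd_eval_sub (D n) X ((pf i).map C)
            rwa [hcompeval, hcompeval, comp_X] at h0
          have h2 : pf i ∣ (pf i).comp (D n) - pf i :=
            ((hpt ▸ Finset.dvd_prod_of_mem pf (Finset.mem_univ i)).trans
              (hXdvd n)).trans h1
          have h3 : (pf i).comp (D n) = ((pf i).comp (D n) - pf i) + pf i := by ring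
          rw [h3]; exact dvd_add h2 dvd_rfl
        have hpbc : pf i ^ (mexp i - 1) ∣ pbar.comp (D n) := by
          have h4 : pf i ^ (mexp i - 1) ∣ pbar := by
            rw [hpbar_eq]; exact Finset.dvd_prod_of_mem _ (Finset.mem_univ i)
          obtain ⟨c, hc⟩ := h4
          refine dvd_trans (pow_dvd_pow_of_dvd hpfc _) ⟨c.comp (D n), ?_⟩
          rw [← pow_comp, ← mul_comp, ← hc]
        have t1 : pf i ^ min (2 ^ (n + 1)) (mexp i)
            ∣ e * (1 - (q * derivative ptilde).comp (D n)) := by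
          have hd1 : pf i ^ (mexp i - 1) ∣ 1 - (q * derivative ptilde).comp (D n) := by
            have h1 : pbar.comp (D n) ∣ (q * derivative ptilde - 1).comp (D n) := by
              obtain ⟨c, hc⟩ := hq
              exact ⟨c.comp (D n), by rw [hc, mul_comp]⟩
            have h5 : (1 : k[X]) - (q * derivative ptilde).comp (D n)
                = -((q * derivative ptilde - 1).comp (D n)) := by
              rw [sub_comp, one_comp]; ring
            rw [h5]
            exact dvd_neg.mpr (hpbc.trans h1)
          have hexp : min (2 ^ (n + 1)) (mexp i) ≤ min (2 ^ n) (mexp i) + (mexp i - 1) :=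
            calc min (2 ^ (n + 1)) (mexp i) ≤ mexp i := min_le_right _ _
              _ = 1 + (mexp i - 1) := by have := hm1 i; omega
              _ ≤ min (2 ^ n) (mexp i) + (mexp i - 1) := Nat.add_le_add_right hmin1 _
          refine (pow_dvd_pow _ hexp).trans ?_
          rw [pow_add]
          exact mul_dvd_mul (ih i) hd1
        have t2 : pf i ^ min (2 ^ (n + 1)) (mexp i) ∣ e ^ 2 * (qc ^ 2 * w) := by
          have hexp : min (2 ^ (n + 1)) (mexp i) ≤ 2 * min (2 ^ n) (mexp i) := by
            rcases le_total (2 ^ n) (mexp i) with h | h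
            · calc min (2 ^ (n + 1)) (mexp i) ≤ 2 ^ (n + 1) := min_le_left _ _
                _ = 2 * 2 ^ n := by rw [pow_succ]; ring
                _ = 2 * min (2 ^ n) (mexp i) := by rw [min_eq_left h]
            · rw [min_eq_right h]
              calc min (2 ^ (n + 1)) (mexp i) ≤ mexp i := min_le_right _ _
                _ ≤ 2 * mexp i := by omega
          refine ((pow_dvd_pow _ hexp).trans ?_).mul_right _
          rw [mul_comm 2, pow_mul]
          exact pow_dvd_pow_of_dvd (ih i) 2
        exact dvd_add t1 t2
  -- conclusion : p divides ptilde ∘ D N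
  have hpcomp : p ∣ ptilde.comp (D N) := by
    rw [hp]
    apply Finset.prod_dvd_of_coprime
    · intro i _ j _ hij
      exact (hcop hij).pow
    · intro i _
      have hkey := key N i
      have hmineqi : min (2 ^ N) (mexp i) = mexp i :=
        min_eq_right ((hm ▸ Finset.le_sup (Finset.mem_univ i)).trans hN1)
      rwa [hmineqi] at hkey
  have hptdN : aeval (d N) ptilde = 0 := by
    obtain ⟨c, hc⟩ := hpcomp
    rw [← hDa, ← aeval_comp, hc, map_mul, hann, zero_mul]
  have habs : AbsSemisimple k (d N) := ⟨ptilde, hsepT, hptdN⟩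
  obtain ⟨g, hg⟩ := hXdvd N
  have hudN : u - d N = aeval u (X - D N) := by
    rw [map_sub, aeval_X, hDa]
  have hnilud : IsNilpotent (u - d N) := by
    refine ⟨m, ?_⟩
    rw [hudN, ← map_pow]
    obtain ⟨c, hc⟩ := hpdvd
    have hXDN : (X - D N) ^ m = (-1) ^ m * (p * (c * g ^ m)) := by
      have h1 : X - D N = -(ptilde * g) := by rw [← hg]; ring
      rw [h1, neg_pow, mul_pow, hc]; ring
    rw [hXDN]
    simp [map_mul, hann]
  have hcommdN : d N * (u - d N) = (u - d N) * d N := by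
    rw [hudN, ← hDa, ← map_mul, ← map_mul, mul_comm]
  have hJC : IsJordanChevalley k u (d N) (u - d N) :=
    ⟨habs, hnilud, by abel, hcommdN⟩
  refine ⟨hptdN, habs, hnilud, hcommdN, hJC, ?_⟩
  -- uniqueness
  rintro d' s' ⟨⟨f', hf'sep, hf'ann⟩, hs'nil, hu', hds'⟩
  have hs'eq : s' = u - d' := by rw [hu']; abel
  have hcud' : Commute u d' := by
    show u * d' = d' * u
    rw [hu', add_mul, mul_add, hds']
  have hcus' : Commute s' u := by
    show s' * u = u * s'
    rw [hu', mul_add, add_mul, hds']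
  have hcd'dN : Commute d' (d N) := by
    rw [← hDa]; exact jc_commute_aeval hcud'.symm (D N)
  have hcs'dN : Commute s' (d N) := by
    rw [← hDa]; exact jc_commute_aeval hcus' (D N)
  have hnil_t : IsNilpotent (d' - d N) := by
    have h1 : d' - d N = (u - d N) - s' := by rw [hs'eq]; abel
    rw [h1]
    exact Commute.isNilpotent_sub (hcus'.symm.sub_left hcs'dN.symm) hnilud hs'nil
  have hd'dN : d' = d N :=
    jc_unique_core hcd'dN.symm hsepT hf'sep hptdN hf'ann hnil_t
  exact ⟨hd'dN, by rw [hs'eq, hd'dN]⟩
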